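/- Let (X, μ) be a measure space with 0 < μ(X) < ∞, let q ∈ (1,∞), and let f : X → [0,∞) be measurable and essentially bounded with 0 < ‖f‖_{L^∞} < ∞. Then, writing M_q := ‖f‖_{L^{q,∞}} (which is positive), one has ( ∫₀^∞ λ · d_f(λ)^{2/q} dλ )^{1/2} ≤ M_q · ( 1 + ( log( ‖f‖_{L^∞} · μ(X)^{1/q} / M_q ) )^{1/2} ). -/

import Mathlib

open MeasureTheory Set

/-- The weak Lorentz quasinorm `‖f‖_{L^{s,∞}} = sup_{λ>0} λ·μ({f > λ})^{1/s}`
(valued in `ENNReal`). -/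
noncomputable def weakLorentzNorm {X : Type*} [MeasurableSpace X]
    (μ : Measure X) (f : X → ℝ) (s : ℝ) : ENNReal :=
  ⨆ l ∈ Set.Ioi (0 : ℝ), ENNReal.ofReal l * (μ {x | l < f x}) ^ (1 / s)

/-- on a measure space with `0 < μ(X) < ∞`, for `q ∈ (1,∞)` and a
measurable, nonnegative, essentially bounded `f` with `0 < ‖f‖_{L^∞} < ∞`,
writing `M_q := ‖f‖_{L^{q,∞}}` (which is positive), one has
`(∫₀^∞ λ·d_f(λ)^{2/q} dλ)^{1/2} ≤ M_q·(1 + (log(‖f‖_{L^∞}·μ(X)^{1/q}/M_q))^{1/2})`. -/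
theorem stmt_5 {X : Type*} [MeasurableSpace X] (μ : Measure X)
    (f : X → ℝ) (hf : Measurable f) (hf0 : ∀ x, 0 ≤ f x)
    (q : ℝ) (hq : 1 < q)
    (hμ0 : μ Set.univ ≠ 0) (hμ : μ Set.univ ≠ ⊤)
    (hbdd : ∃ C : ℝ, ∀ᵐ x ∂μ, f x ≤ C)
    (hess : 0 < essSup f μ) :
    0 < (weakLorentzNorm μ f q).toReal ∧
      (∫⁻ l in Set.Ioi (0 : ℝ),
          ENNReal.ofReal l * (μ {x | l < f x}) ^ (2 / q)) ^ ((1 : ℝ) / 2) ≤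
        ENNReal.ofReal ((weakLorentzNorm μ f q).toReal *
          (1 + Real.sqrt (Real.log (essSup f μ * (μ Set.univ).toReal ^ (1 / q) /
            (weakLorentzNorm μ f q).toReal)))) := by
  obtain ⟨C, hC⟩ := hbdd
  have hq0 : (0:ℝ) < q := lt_trans one_pos hq
  set B : ℝ := essSup f μ with hBdef
  set d : ℝ → ENNReal := fun l => μ {x | l < f x} with hd
  have hbd : Filter.IsBoundedUnder (· ≤ ·) (ae μ) f := ⟨C, Filter.eventually_map.2 hC⟩
  have hfB : ∀ᵐ x ∂μ, f x ≤ B := ae_le_essSup hbd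
  -- d l = 0 for B ≤ l
  have hd0 : ∀ l, B ≤ l → d l = 0 := by
    intro l hl
    have : μ {x | B < f x} = 0 := meas_essSup_lt hbd
    refine measure_mono_null (fun x hx => ?_) this
    exact lt_of_le_of_lt hl hx
  set M : ENNReal := weakLorentzNorm μ f q with hM
  have hle : ∀ l ∈ Set.Ioi (0:ℝ), ENNReal.ofReal l * (d l) ^ (1 / q) ≤ M := by
    intro l hl
    exact le_biSup (fun l => ENNReal.ofReal l * (d l) ^ (1 / q)) hl
  set t : ℝ := (μ Set.univ).toReal with htdef
  have ht : 0 < t := ENNReal.toReal_pos hμ0 hμ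
  have hμt : μ Set.univ = ENNReal.ofReal t := (ENNReal.ofReal_toReal hμ).symm
  set V : ℝ := t ^ (1/q) with hVdef
  have hV : 0 < V := Real.rpow_pos_of_pos ht _
  have hμV : (μ Set.univ) ^ (1/q) = ENNReal.ofReal V := by
    rw [hμt, ← ENNReal.ofReal_rpow_of_pos ht]
  have hBpos : 0 < B := hess
  -- M ≤ ofReal (B * V)
  have hMb : M ≤ ENNReal.ofReal (B * V) := by
    rw [hM, weakLorentzNorm]
    refine iSup₂_le fun l hl => ?_
    rcases le_or_gt B l with h | h
    · rw [show μ {x | l < f x} = 0 from hd0 l h, ENNReal.zero_rpow_of_pos (by positivity),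
        mul_zero]
      exact zero_le
    · rw [ENNReal.ofReal_mul hBpos.le, ← hμV]
      exact mul_le_mul' (ENNReal.ofReal_le_ofReal h.le)
        (ENNReal.rpow_le_rpow (measure_mono (subset_univ _)) (by positivity))
  have hMtop : M ≠ ⊤ := ne_top_of_le_ne_top ENNReal.ofReal_ne_top hMb
  have hM0 : M ≠ 0 := by
    intro h
    have h2 : ENNReal.ofReal (B/2) * (d (B/2)) ^ (1/q) ≤ M := hle (B/2) (by
      simpa using half_pos hBpos)
    rw [h, le_zero_iff, mul_eq_zero] at h2
    have hd2 : d (B/2) ≠ 0 := by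
      intro h3
      have hae : ∀ᵐ x ∂μ, f x ≤ B/2 := by
        rw [ae_iff]; simpa [not_le] using h3
      haveI : (ae μ).NeBot := ae_neBot.2 (fun h => hμ0 (by simp [h]))
      have hcob : (ae μ).IsCoboundedUnder (· ≤ ·) f :=
        Filter.IsBoundedUnder.isCoboundedUnder_le
          ⟨0, Filter.eventually_map.2 (Filter.Eventually.of_forall hf0)⟩
      have : B ≤ B/2 := Filter.limsup_le_of_le hcob hae
      linarith
    rcases h2 with h2 | h2
    · exact absurd h2 (by positivity)
    · exact hd2 (by
        have := ENNReal.rpow_eq_zero_iff.mp h2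
        rcases this with ⟨h4, _⟩ | ⟨_, h4⟩
        · exact h4
        · linarith [one_div_pos.mpr hq0])
  set m : ℝ := M.toReal with hmdef
  have hm : 0 < m := ENNReal.toReal_pos hM0 hMtop
  have hMm : M = ENNReal.ofReal m := (ENNReal.ofReal_toReal hMtop).symm
  refine ⟨hm, ?_⟩
  have hmBV : m ≤ B * V := by
    have := ENNReal.toReal_mono ENNReal.ofReal_ne_top hMb
    rwa [ENNReal.toReal_ofReal (by positivity)] at this
  set L : ℝ := Real.log (B * V / m) with hLdef
  have hL : 0 ≤ L := Real.log_nonneg ((one_le_div hm).2 hmBV)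
  set T : ℝ := m / V with hT
  have hT0 : 0 < T := by positivity
  have hTB : T ≤ B := by
    rw [hT, div_le_iff₀ hV]
    exact hmBV
  -- pointwise bounds
  have hbound1 : ∀ l ∈ Ioc (0:ℝ) T, ENNReal.ofReal l * (d l) ^ (2/q)
      ≤ ENNReal.ofReal (l * V^2) := by
    intro l hl
    have hV2 : (μ Set.univ) ^ (2/q) = ENNReal.ofReal (V^2) := by
      rw [hμt, ENNReal.ofReal_rpow_of_pos ht]
      congr 1
      rw [hVdef, ← Real.rpow_two, ← Real.rpow_mul ht.le]
      congr 1
      ring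
    rw [ENNReal.ofReal_mul hl.1.le, ← hV2]
    exact mul_le_mul' le_rfl
      (ENNReal.rpow_le_rpow (measure_mono (subset_univ _)) (by positivity))
  have hbound2 : ∀ l ∈ Ioc T B, ENNReal.ofReal l * (d l) ^ (2/q)
      ≤ ENNReal.ofReal (m^2 / l) := by
    intro l hl
    have hl0 : 0 < l := lt_trans hT0 hl.1
    have hol0 : ENNReal.ofReal l ≠ 0 := by simp [hl0]
    rw [ENNReal.ofReal_div_of_pos hl0, ENNReal.ofReal_pow hm.le, ← hMm,
      ENNReal.le_div_iff_mul_le (Or.inl hol0) (Or.inl ENNReal.ofReal_ne_top)]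
    have key : ENNReal.ofReal l * d l ^ (2/q) * ENNReal.ofReal l
        = (ENNReal.ofReal l * d l ^ (1/q)) ^ 2 := by
      have : d l ^ (2/q) = (d l ^ (1/q)) ^ 2 := by
        rw [← ENNReal.rpow_two, ← ENNReal.rpow_mul]
        congr 1
        ring
      rw [this]; ring
    rw [key]
    exact pow_le_pow_left' (hle l hl0) 2
  -- measurability of integrand
  have hdm : Measurable d := Antitone.measurable (fun a b hab =>
    measure_mono (fun x hx => lt_of_le_of_lt hab hx))
  have hgm : Measurable fun l => ENNReal.ofReal l * (d l) ^ (2/q) :=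
    (measurable_id.ennreal_ofReal).mul (hdm.pow_const _)
  -- split the integral
  have hsplit : Ioi (0:ℝ) = Ioc 0 T ∪ (Ioc T B ∪ Ioi B) := by
    rw [Ioc_union_Ioi_eq_Ioi hTB, Ioc_union_Ioi_eq_Ioi hT0.le]
  have hI3 : ∫⁻ l in Ioi B, ENNReal.ofReal l * (d l) ^ (2/q) = 0 := by
    refine le_antisymm ?_ (zero_le)
    calc ∫⁻ l in Ioi B, ENNReal.ofReal l * (d l) ^ (2/q)
        ≤ ∫⁻ _ in Ioi B, (0:ENNReal) :=
          setLIntegral_mono measurable_const (fun l hl => by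
            simp [hd0 l (le_of_lt hl),
              ENNReal.zero_rpow_of_pos (show (0:ℝ) < 2/q by positivity)])
      _ = 0 := lintegral_zero
  -- first piece
  have hI1 : ∫⁻ l in Ioc (0:ℝ) T, ENNReal.ofReal l * (d l) ^ (2/q)
      ≤ ENNReal.ofReal (m^2/2) := by
    calc ∫⁻ l in Ioc (0:ℝ) T, ENNReal.ofReal l * (d l) ^ (2/q)
        ≤ ∫⁻ l in Ioc (0:ℝ) T, ENNReal.ofReal (l * V^2) :=
          setLIntegral_mono ((measurable_id.mul_const _).ennreal_ofReal) hbound1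
      _ = ENNReal.ofReal (∫ l in Ioc (0:ℝ) T, l * V^2) := by
          have hint1 : IntegrableOn (fun l : ℝ => l * V^2) (Ioc 0 T) :=
            Continuous.integrableOn_Ioc (by fun_prop)
          exact (ofReal_integral_eq_lintegral_ofReal hint1
            ((ae_restrict_iff' measurableSet_Ioc).2 (Filter.Eventually.of_forall
              fun l hl => mul_nonneg hl.1.le (sq_nonneg V)))).symm
      _ = ENNReal.ofReal (m^2/2) := by
          rw [← intervalIntegral.integral_of_le hT0.le,
            intervalIntegral.integral_mul_const, integral_id]
          congr 1
          rw [hT]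
          field_simp
          ring
  -- second piece
  have hI2 : ∫⁻ l in Ioc T B, ENNReal.ofReal l * (d l) ^ (2/q)
      ≤ ENNReal.ofReal (m^2 * L) := by
    have hint : IntegrableOn (fun l => m^2 / l) (Ioc T B) := by
      refine ((continuousOn_const.div continuousOn_id fun x hx =>
        ne_of_gt (lt_of_lt_of_le hT0 hx.1)).integrableOn_Icc).mono_set Ioc_subset_Icc_self
    calc ∫⁻ l in Ioc T B, ENNReal.ofReal l * (d l) ^ (2/q)
        ≤ ∫⁻ l in Ioc T B, ENNReal.ofReal (m^2 / l) :=
          setLIntegral_mono ((measurable_const.div measurable_id).ennreal_ofReal) hbound2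
      _ = ENNReal.ofReal (∫ l in Ioc T B, m^2 / l) :=
          (ofReal_integral_eq_lintegral_ofReal hint
            ((ae_restrict_iff' measurableSet_Ioc).2 (Filter.Eventually.of_forall
              fun l hl => div_nonneg (sq_nonneg m) (le_of_lt (lt_trans hT0 hl.1))))).symm
      _ = ENNReal.ofReal (m^2 * L) := by
          rw [← intervalIntegral.integral_of_le hTB]
          simp_rw [div_eq_mul_one_div (m^2)]
          rw [intervalIntegral.integral_const_mul, integral_one_div (by
            intro h
            rw [Set.uIcc_of_le hTB] at h
            exact absurd h.1 (not_le.2 hT0))]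
          congr 2
          rw [hLdef, hT, div_div_eq_mul_div]
  -- combine
  have hItot : (∫⁻ l in Ioi (0:ℝ), ENNReal.ofReal l * (d l) ^ (2/q))
      ≤ ENNReal.ofReal (m^2/2 + m^2 * L) := by
    have h1 : (∫⁻ l in Ioi (0:ℝ), ENNReal.ofReal l * (d l) ^ (2/q))
        = (∫⁻ l in Ioc (0:ℝ) T, ENNReal.ofReal l * (d l) ^ (2/q))
          + ((∫⁻ l in Ioc T B, ENNReal.ofReal l * (d l) ^ (2/q))
            + ∫⁻ l in Ioi B, ENNReal.ofReal l * (d l) ^ (2/q)) := by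
      rw [← lintegral_union measurableSet_Ioi (Ioc_disjoint_Ioi le_rfl),
        Ioc_union_Ioi_eq_Ioi hTB,
        ← lintegral_union measurableSet_Ioi (Ioc_disjoint_Ioi le_rfl),
        Ioc_union_Ioi_eq_Ioi hT0.le]
    rw [h1, hI3, add_zero]
    exact (add_le_add hI1 hI2).trans
      (ENNReal.ofReal_add (by positivity) (by positivity)).symm.le
  -- conclude
  have hfinal : (∫⁻ l in Ioi (0:ℝ), ENNReal.ofReal l * (d l) ^ (2/q)) ^ ((1:ℝ)/2)
      ≤ ENNReal.ofReal (m * (1 + Real.sqrt L)) :=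
    calc (∫⁻ l in Ioi (0:ℝ), ENNReal.ofReal l * (d l) ^ (2/q)) ^ ((1:ℝ)/2)
        ≤ (ENNReal.ofReal (m^2/2 + m^2 * L)) ^ ((1:ℝ)/2) :=
          ENNReal.rpow_le_rpow hItot (by norm_num)
      _ = ENNReal.ofReal ((m^2/2 + m^2 * L) ^ ((1:ℝ)/2)) :=
          ENNReal.ofReal_rpow_of_nonneg (by positivity) (by norm_num)
      _ ≤ ENNReal.ofReal (m * (1 + Real.sqrt L)) := by
          apply ENNReal.ofReal_le_ofReal
          rw [← Real.sqrt_eq_rpow]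
          have hsq : Real.sqrt L ^ 2 = L := Real.sq_sqrt hL
          have hb : m^2/2 + m^2 * L ≤ (m * (1 + Real.sqrt L))^2 := by
            nlinarith [Real.sqrt_nonneg L, sq_nonneg m, sq_nonneg (m * Real.sqrt L)]
          calc Real.sqrt (m^2/2 + m^2*L) ≤ Real.sqrt ((m * (1 + Real.sqrt L))^2) :=
                Real.sqrt_le_sqrt hb
            _ = m * (1 + Real.sqrt L) := Real.sqrt_sq (by positivity)
  exact hfinal
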